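/- Let K > 0, let a, b, c be nonnegative reals and A ∈ [0, π] be such that cosh(√K · a) = cosh(√K · b) · cosh(√K · c) − sinh(√K · b) · sinh(√K · c) · cos A, and assume b ≤ 1/(4√K). Let ā ≥ 0 be defined by ā² = b² + c² − 2 b c cos A. Then ā² ≤ a² ≤ (1 + 2 K b²) ā². -/

import Mathlib

set_option maxHeartbeats 1000000

open Real



-- Taylor-type bound: sinh y ≤ y + (2/9) y³ on [0,1]
lemma HD_sinh_ub {y : ℝ} (h0 : 0 ≤ y) (h1 : y ≤ 1) :
    Real.sinh y ≤ y + (2/9) * y ^ 3 := by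
  have hb1 := Real.exp_bound (x := y) (by rw [abs_of_nonneg h0]; exact h1) (n := 3) (by norm_num)
  have hb2 := Real.exp_bound (x := -y) (by rw [abs_neg, abs_of_nonneg h0]; exact h1) (n := 3)
    (by norm_num)
  rw [abs_of_nonneg h0] at hb1
  rw [abs_neg, abs_of_nonneg h0] at hb2
  simp only [Finset.sum_range_succ, Finset.sum_range_zero] at hb1 hb2
  norm_num [Nat.factorial] at hb1 hb2
  rw [Real.sinh_eq]
  have e1 := abs_sub_le_iff.1 hb1
  have e2 := abs_sub_le_iff.1 hb2
  nlinarith [e1.1, e2.2, pow_nonneg h0 3]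

-- A1 : sinh x ≤ x cosh x for x ≥ 0
lemma HD_A1 {x : ℝ} (hx : 0 ≤ x) : Real.sinh x ≤ x * Real.cosh x := by
  rcases le_or_gt x 1 with h1 | h1
  · have hb1 := Real.exp_bound' hx h1 (n := 4) (by norm_num)
    simp only [Finset.sum_range_succ, Finset.sum_range_zero] at hb1
    norm_num [Nat.factorial] at hb1
    have hE1 : (1:ℝ) ≤ Real.exp x := Real.one_le_exp hx
    have hEpos : (0:ℝ) < Real.exp x := Real.exp_pos x
    have hinv : Real.exp (-x) = (Real.exp x)⁻¹ := Real.exp_neg x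
    have hP2 : (Real.exp x)^2 ≤ (1 + x + x ^ 2 / 2 + x ^ 3 / 6 + x ^ 4 * 5 / 96)^2 := by
      nlinarith [hb1, hE1]
    have key : (1 - x) * (Real.exp x) ^ 2 ≤ 1 + x := by
      have hpoly : (1 - x) * (1 + x + x ^ 2 / 2 + x ^ 3 / 6 + x ^ 4 * 5 / 96)^2 ≤ 1 + x := by
        nlinarith [pow_nonneg hx 3, pow_nonneg hx 4, pow_nonneg hx 5, pow_nonneg hx 6,
          pow_nonneg hx 7, pow_nonneg hx 8, pow_nonneg hx 9]
      nlinarith [hP2, sq_nonneg (Real.exp x)]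
    have hv : (0:ℝ) < (Real.exp x)⁻¹ := by positivity
    have h6 : 0 ≤ (x-1)*(Real.exp x)^2 + (1+x) := by linarith
    have h7 : 0 ≤ ((x-1)*(Real.exp x)^2 + (1+x)) * (Real.exp x)⁻¹ := mul_nonneg h6 hv.le
    have h8 : ((x-1)*(Real.exp x)^2 + (1+x)) * (Real.exp x)⁻¹
        = (x-1)*Real.exp x + (1+x)*(Real.exp x)⁻¹ := by
      field_simp
    rw [h8] at h7
    rw [Real.sinh_eq, Real.cosh_eq, hinv]
    linarith
  · have h2 := Real.cosh_sub_sinh x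
    have h3 : 0 < Real.exp (-x) := Real.exp_pos _
    have h4 : 0 < Real.cosh x := Real.cosh_pos x
    nlinarith

-- A2 : sinh t / t is monotone
lemma HD_A2 {x y : ℝ} (hx : 0 ≤ x) (hxy : x ≤ y) :
    y * Real.sinh x ≤ x * Real.sinh y := by
  have hh : 0 ≤ y - x := by linarith
  have hadd := Real.sinh_add x (y - x)
  rw [show x + (y - x) = y by ring] at hadd
  have h1 : 1 ≤ Real.cosh (y-x) := Real.one_le_cosh _
  have h2 : y - x ≤ Real.sinh (y-x) := Real.self_le_sinh_iff.mpr hh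
  have h3 : 0 ≤ Real.sinh x := Real.sinh_nonneg_iff.mpr hx
  have h4 : Real.sinh x ≤ x * Real.cosh x := HD_A1 hx
  have h5 : 0 < Real.cosh x := Real.cosh_pos x
  nlinarith [mul_nonneg (mul_nonneg hx h3) (sub_nonneg.2 h1),
    mul_nonneg (mul_nonneg hx h5.le) (sub_nonneg.2 h2),
    mul_nonneg hh (sub_nonneg.2 h4)]

-- cosh lower bound
lemma HD_coshlb {x : ℝ} (hx : 0 ≤ x) : 1 + x^2/2 ≤ Real.cosh x := by
  have h1 := Real.cosh_two_mul (x/2)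
  rw [show 2*(x/2) = x by ring] at h1
  have h2 : x/2 ≤ Real.sinh (x/2) := Real.self_le_sinh_iff.mpr (by linarith)
  have h3 : Real.cosh (x/2) ^ 2 = Real.sinh (x/2) ^ 2 + 1 := Real.cosh_sq _
  nlinarith [h2]

lemma HD_cosh_mono {x y : ℝ} (hx : 0 ≤ x) (hxy : x ≤ y) : Real.cosh x ≤ Real.cosh y := by
  rw [Real.cosh_le_cosh, abs_of_nonneg hx, abs_of_nonneg (le_trans hx hxy)]
  exact hxy

lemma HD_le_of_cosh_le {x y : ℝ} (hx : 0 ≤ x) (hy : 0 ≤ y)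
    (h : Real.cosh x ≤ Real.cosh y) : x ≤ y := by
  rw [Real.cosh_le_cosh, abs_of_nonneg hx, abs_of_nonneg hy] at h
  exact h


-- tangent-line lemma
lemma HD_T {Y₀ Y : ℝ} (h0 : 0 < Y₀) (hY : Y₀ ≤ Y) :
    (Y^2 - Y₀^2) * Real.sinh Y₀ ≤ 2 * Y₀ * (Real.cosh Y - Real.cosh Y₀) := by
  have hh : 0 ≤ Y - Y₀ := by linarith
  have hadd := Real.cosh_add Y₀ (Y - Y₀)
  rw [show Y₀ + (Y - Y₀) = Y by ring] at hadd
  have h1 : 1 + (Y-Y₀)^2/2 ≤ Real.cosh (Y-Y₀) := HD_coshlb hh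
  have h2 : Y - Y₀ ≤ Real.sinh (Y-Y₀) := Real.self_le_sinh_iff.mpr hh
  have h3 : Real.sinh Y₀ ≤ Y₀ * Real.cosh Y₀ := HD_A1 h0.le
  have h4 : 0 ≤ Real.sinh Y₀ := Real.sinh_nonneg_iff.mpr h0.le
  have h5 : 0 < Real.cosh Y₀ := Real.cosh_pos Y₀
  nlinarith [mul_nonneg (mul_nonneg h0.le h4) (sub_nonneg.2 h2),
    mul_nonneg (mul_nonneg h0.le h5.le) (sub_nonneg.2 h1),
    mul_nonneg (sq_nonneg (Y-Y₀)) (sub_nonneg.2 h3)]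

-- slope/convexity lemma
lemma HD_slope {Y₀ Y Y₁ : ℝ} (h0 : 0 ≤ Y₀) (hY : Y₀ ≤ Y) (hY1 : Y ≤ Y₁) :
    (Real.cosh Y - Real.cosh Y₀) * (Y₁^2 - Y₀^2) ≤ (Real.cosh Y₁ - Real.cosh Y₀) * (Y^2 - Y₀^2) := by
  set p₀ := (Y + Y₀)/2 with hp₀
  set q₀ := (Y - Y₀)/2 with hq₀
  set p₁ := (Y₁ + Y₀)/2 with hp₁
  set q₁ := (Y₁ - Y₀)/2 with hq₁
  have e₀ : Real.cosh Y - Real.cosh Y₀ = 2 * Real.sinh p₀ * Real.sinh q₀ := by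
    have h := Real.cosh_add p₀ q₀
    have h' := Real.cosh_sub p₀ q₀
    rw [show p₀ + q₀ = Y by rw [hp₀, hq₀]; ring] at h
    rw [show p₀ - q₀ = Y₀ by rw [hp₀, hq₀]; ring] at h'
    rw [h, h']; ring
  have e₁ : Real.cosh Y₁ - Real.cosh Y₀ = 2 * Real.sinh p₁ * Real.sinh q₁ := by
    have h := Real.cosh_add p₁ q₁
    have h' := Real.cosh_sub p₁ q₁
    rw [show p₁ + q₁ = Y₁ by rw [hp₁, hq₁]; ring] at h
    rw [show p₁ - q₁ = Y₀ by rw [hp₁, hq₁]; ring] at h'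
    rw [h, h']; ring
  have hp0n : 0 ≤ p₀ := by rw [hp₀]; linarith
  have hq0n : 0 ≤ q₀ := by rw [hq₀]; linarith
  have hpp : p₀ ≤ p₁ := by rw [hp₀, hp₁]; linarith
  have hqq : q₀ ≤ q₁ := by rw [hq₀, hq₁]; linarith
  have a1 : p₁ * Real.sinh p₀ ≤ p₀ * Real.sinh p₁ := HD_A2 hp0n hpp
  have a2 : q₁ * Real.sinh q₀ ≤ q₀ * Real.sinh q₁ := HD_A2 hq0n hqq
  have hsp0 : 0 ≤ Real.sinh p₀ := Real.sinh_nonneg_iff.mpr hp0n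
  have hsq0 : 0 ≤ Real.sinh q₀ := Real.sinh_nonneg_iff.mpr hq0n
  have key : (p₁ * Real.sinh p₀) * (q₁ * Real.sinh q₀) ≤ (p₀ * Real.sinh p₁) * (q₀ * Real.sinh q₁) :=
    mul_le_mul a1 a2 (mul_nonneg (by linarith) hsq0)
      (mul_nonneg hp0n (Real.sinh_nonneg_iff.mpr (le_trans hp0n hpp)))
  have eY : Y^2 - Y₀^2 = 4 * (p₀ * q₀) := by rw [hp₀, hq₀]; ring
  have eY1 : Y₁^2 - Y₀^2 = 4 * (p₁ * q₁) := by rw [hp₁, hq₁]; ring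
  rw [e₀, e₁, eY, eY1]
  nlinarith [key]


lemma HD_cosh1 : Real.cosh 1 ≤ 1.6 := by
  rw [Real.cosh_eq]
  have h1 : Real.exp 1 < 2.7182818286 := Real.exp_one_lt_d9
  have h2 : Real.exp (-1) = (Real.exp 1)⁻¹ := Real.exp_neg 1
  have h3 : (2.7182818283:ℝ) < Real.exp 1 := Real.exp_one_gt_d9
  have h4 : (Real.exp 1)⁻¹ ≤ 1/2.7182818283 := by
    rw [inv_eq_one_div]
    apply div_le_div_of_nonneg_left (by norm_num) (by norm_num) h3.le
  rw [h2]; norm_num at h4 ⊢; linarith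

lemma HD_tanh1 : 0.76 * Real.cosh 1 ≤ Real.sinh 1 := by
  rw [Real.cosh_eq, Real.sinh_eq]
  have h3 : (2.7182818283:ℝ) < Real.exp 1 := Real.exp_one_gt_d9
  have h2 : Real.exp (-1) = (Real.exp 1)⁻¹ := Real.exp_neg 1
  have hp : (0:ℝ) < Real.exp 1 := Real.exp_pos 1
  have hv : Real.exp 1 * (Real.exp 1)⁻¹ = 1 := mul_inv_cancel₀ (ne_of_gt hp)
  rw [h2]
  have hvp : (0:ℝ) < (Real.exp 1)⁻¹ := by positivity
  -- 0.24 e ≥ 1.76 / e  ⟺  e² ≥ 7.34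
  nlinarith [hv, hvp, h3, sq_nonneg (Real.exp 1 - 2.7182818283)]

lemma HD_tanh3 : 0.995 * Real.cosh 3 ≤ Real.sinh 3 := by
  rw [Real.cosh_eq, Real.sinh_eq]
  have h3 : (2.7182818283:ℝ) < Real.exp 1 := Real.exp_one_gt_d9
  have he3 : Real.exp 3 = Real.exp 1 ^ 3 := by
    rw [← Real.exp_nat_mul]; norm_num
  have hp : (0:ℝ) < Real.exp 3 := Real.exp_pos 3
  have h2 : Real.exp (-3) = (Real.exp 3)⁻¹ := Real.exp_neg 3
  have hv : Real.exp 3 * (Real.exp 3)⁻¹ = 1 := mul_inv_cancel₀ (ne_of_gt hp)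
  rw [h2]
  have hvp : (0:ℝ) < (Real.exp 3)⁻¹ := by positivity
  have hcube : (20:ℝ) ≤ Real.exp 3 := by
    rw [he3]
    calc (20:ℝ) ≤ 2.7182818283^3 := by norm_num
    _ ≤ Real.exp 1 ^ 3 := pow_le_pow_left₀ (by norm_num) h3.le 3
  -- need 0.005 e³ ≥ 1.995 e⁻³ ⟺ (e³)² ≥ 399 ✓ since e³ ≥ 20
  nlinarith [hv, hvp, hcube]

-- G0 : 2 d cosh d ≤ (2 + (31/32) d²) sinh d for d ≥ 0
lemma HD_G0 {d : ℝ} (hd : 0 ≤ d) :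
    2 * d * Real.cosh d ≤ (2 + (31/32) * d^2) * Real.sinh d := by
  set f : ℝ → ℝ := fun x => (2 + (31/32) * x^2) * Real.sinh x - 2 * x * Real.cosh x with hf
  have hder : ∀ x : ℝ, HasDerivAt f ((31/32) * x^2 * Real.cosh x - (1/16) * x * Real.sinh x) x := by
    intro x
    have h1 : HasDerivAt (fun x : ℝ => 2 + (31/32) * x^2) ((31/16) * x) x := by
      have := ((hasDerivAt_pow 2 x).const_mul ((31:ℝ)/32)).const_add 2
      refine this.congr_deriv ?_; norm_num; ring
    have h2 := Real.hasDerivAt_sinh x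
    have h3 := Real.hasDerivAt_cosh x
    have h4 : HasDerivAt (fun x : ℝ => 2 * x) 2 x := by
      simpa using (hasDerivAt_id x).const_mul (2:ℝ)
    have h5 := (h1.mul h2).sub (h4.mul h3)
    refine h5.congr_deriv ?_
    ring
  have hmono : MonotoneOn f (Set.Ici 0) := by
    apply monotoneOn_of_deriv_nonneg (convex_Ici 0)
    · exact Continuous.continuousOn (by continuity)
    · intro x hx
      exact (hder x).differentiableAt.differentiableWithinAt
    · intro x hx
      rw [(hder x).deriv]
      simp only [interior_Ici, Set.mem_Ioi] at hx
      have hA := HD_A1 hx.le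
      nlinarith [Real.cosh_pos x, hA, hx.le, mul_le_mul_of_nonneg_left hA hx.le]
  have h0 : f 0 = 0 := by simp [hf]
  have := hmono (Set.mem_Ici.2 (le_refl 0)) (Set.mem_Ici.2 hd) hd
  rw [h0] at this
  simp only [hf] at this
  linarith


-- the scalar inequality Z
lemma HD_Z {b d : ℝ} (hb : 0 ≤ b) (hb4 : b ≤ 1/4) (hd : 0 ≤ d) :
    2*d*Real.cosh d + (2/15)*b^2*(d*Real.cosh d)
      ≤ (31/32)*d^2*Real.sinh d + 2*Real.sinh d + (31/16)*b^2*Real.sinh d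
        + 2*b*d^2*Real.cosh d := by
  have hG0 := HD_G0 hd
  have hC1 : (1:ℝ) ≤ Real.cosh d := Real.one_le_cosh d
  have hS0 : 0 ≤ Real.sinh d := Real.sinh_nonneg_iff.mpr hd
  have hb2 : b^2 ≤ 1/16 := by nlinarith
  have hCpos : (0:ℝ) < Real.cosh d := Real.cosh_pos d
  rcases le_or_gt d 1 with h1 | h1
  · -- d ≤ 1 : cosh d ≤ 1.6 and sinh d ≥ d
    have hcd : Real.cosh d ≤ 1.6 := le_trans (HD_cosh_mono hd h1) HD_cosh1
    have hsd : d ≤ Real.sinh d := Real.self_le_sinh_iff.mpr hd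
    have hbr : (2/15)*(d*Real.cosh d) ≤ (31/16)*Real.sinh d := by
      nlinarith [mul_le_mul_of_nonneg_left hcd hd]
    nlinarith [mul_le_mul_of_nonneg_left hbr (sq_nonneg b),
      mul_nonneg (mul_nonneg (mul_nonneg (by norm_num : (0:ℝ) ≤ 2) hb) (sq_nonneg d)) hCpos.le]
  rcases le_or_gt d 3 with h3 | h3
  · -- 1 ≤ d ≤ 3 : sinh d ≥ 0.76 cosh d
    have hid : Real.sinh (d - 1) = Real.sinh d * Real.cosh 1 - Real.cosh d * Real.sinh 1 :=
      Real.sinh_sub d 1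
    have hpos : 0 ≤ Real.sinh (d-1) := Real.sinh_nonneg_iff.mpr (by linarith)
    have hc1 : (0:ℝ) < Real.cosh 1 := Real.cosh_pos 1
    have htan : 0.76 * Real.cosh d ≤ Real.sinh d := by
      have h6 : Real.cosh d * Real.sinh 1 ≤ Real.sinh d * Real.cosh 1 := by linarith
      have h7 : Real.cosh d * (0.76 * Real.cosh 1) ≤ Real.cosh d * Real.sinh 1 :=
        mul_le_mul_of_nonneg_left HD_tanh1 hCpos.le
      nlinarith [h6, h7, hc1]
    have hbr : (2/15)*(d*Real.cosh d) ≤ (31/16)*Real.sinh d := by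
      nlinarith [mul_le_mul_of_nonneg_left htan (by linarith : (0:ℝ) ≤ (2/15)*d)]
    nlinarith [mul_le_mul_of_nonneg_left hbr (sq_nonneg b),
      mul_nonneg (mul_nonneg (mul_nonneg (by norm_num : (0:ℝ) ≤ 2) hb) (sq_nonneg d)) hCpos.le]
  · -- d ≥ 3 : sinh d ≥ 0.995 cosh d
    have hid : Real.sinh (d - 3) = Real.sinh d * Real.cosh 3 - Real.cosh d * Real.sinh 3 :=
      Real.sinh_sub d 3
    have hpos : 0 ≤ Real.sinh (d-3) := Real.sinh_nonneg_iff.mpr (by linarith)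
    have hc3 : (0:ℝ) < Real.cosh 3 := Real.cosh_pos 3
    have htan : 0.995 * Real.cosh d ≤ Real.sinh d := by
      have h6 : Real.cosh d * Real.sinh 3 ≤ Real.sinh d * Real.cosh 3 := by linarith
      have h7 : Real.cosh d * (0.995 * Real.cosh 3) ≤ Real.cosh d * Real.sinh 3 :=
        mul_le_mul_of_nonneg_left HD_tanh3 hCpos.le
      nlinarith [h6, h7, hc3]
    -- (31/32) d² sinh d ≥ (31/32)·3·d·(0.995 cosh d) ≥ 2.008 d cosh d
    have hdC : 0 ≤ d * Real.cosh d := mul_nonneg hd hCpos.le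
    have key : (2 + (2/15)*b^2) * (d * Real.cosh d) ≤ (31/32)*d^2*Real.sinh d := by
      have h8 : (93/32) * (d * Real.sinh d) ≤ (31/32)*d^2*Real.sinh d := by
        nlinarith [mul_nonneg hd hS0]
      have h9 : (0.995 : ℝ) * (d * Real.cosh d) ≤ d * Real.sinh d := by
        nlinarith [mul_le_mul_of_nonneg_left htan hd]
      have h10 := mul_le_mul_of_nonneg_left h9 (by norm_num : (0:ℝ) ≤ 93/32)
      have h11 := mul_le_mul_of_nonneg_right hb2 hdC
      linarith [h8, h10, h11, hdC]
    have hpos1 : 0 ≤ 2*b*d^2*Real.cosh d := by positivity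
    have hpos2 : 0 ≤ (31/16)*b^2*Real.sinh d := by positivity
    linarith [key, hpos1, hpos2, hS0]


lemma HD_mu_sq {b : ℝ} : (Real.sqrt (1+2*b^2))^2 = 1+2*b^2 :=
  Real.sq_sqrt (by positivity)

lemma HD_mu_one {b : ℝ} : 1 ≤ Real.sqrt (1+2*b^2) :=
  Real.le_sqrt_of_sq_le (by nlinarith [sq_nonneg b])

lemma HD_mu_ub {b : ℝ} : Real.sqrt (1+2*b^2) ≤ 1 + b^2 := by
  rw [Real.sqrt_le_left (by positivity)]
  nlinarith [sq_nonneg b, sq_nonneg (b*b)]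

lemma HD_mu_lb {b : ℝ} (hb : 0 ≤ b) (hb4 : b ≤ 1/4) :
    1 + (31/32)*b^2 ≤ Real.sqrt (1+2*b^2) := by
  apply Real.le_sqrt_of_sq_le
  have hb2 : b^2 ≤ 1/16 := by nlinarith
  nlinarith [sq_nonneg b, mul_le_mul hb2 hb2 (sq_nonneg b) (by norm_num)]

lemma HD_sinh_sq_b {b : ℝ} (hb : 0 ≤ b) (hb4 : b ≤ 1/4) :
    Real.sinh b ^ 2 ≤ b^2 + (16/15)*b^4 := by
  have h1 := HD_A1 hb
  have h2 := Real.cosh_sq b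
  have h3 : 0 ≤ Real.sinh b := Real.sinh_nonneg_iff.mpr hb
  have hb2 : b^2 ≤ 1/16 := by nlinarith
  have h5 : Real.sinh b^2 * (1 - b^2) ≤ b^2 := by
    nlinarith [mul_le_mul h1 h1 h3 (by positivity : (0:ℝ) ≤ b * Real.cosh b)]
  have h6 : Real.sinh b^2 ≤ (16/15) * b^2 := by nlinarith [sq_nonneg (Real.sinh b)]
  nlinarith [mul_le_mul_of_nonneg_right h6 (sq_nonneg b)]

lemma HD_sinh_b_mu {b : ℝ} (hb : 0 ≤ b) (hb4 : b ≤ 1/4) :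
    Real.sinh b ≤ Real.sqrt (1+2*b^2) * b := by
  have h1 := HD_sinh_sq_b hb hb4
  have h4 := HD_mu_sq (b := b)
  have h5 : Real.sinh b ^2 ≤ (Real.sqrt (1+2*b^2) * b)^2 := by
    rw [mul_pow, h4]
    nlinarith [sq_nonneg b, mul_le_mul_of_nonneg_right (show b^2 ≤ 1/16 by nlinarith) (sq_nonneg b)]
  exact (abs_le_of_sq_le_sq' h5 (by positivity)).2

lemma HD_sc_mu {b : ℝ} (hb : 0 ≤ b) (hb4 : b ≤ 1/4) :
    Real.sinh b * Real.cosh b ≤ Real.sqrt (1+2*b^2) * b := by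
  have h1 : Real.sinh (2*b) ≤ 2*b + (2/9)*(2*b)^3 := HD_sinh_ub (by linarith) (by linarith)
  have h2 : Real.sinh (2*b) = 2 * Real.sinh b * Real.cosh b := Real.sinh_two_mul b
  have h3 : 1 + (8/9)*b^2 ≤ Real.sqrt (1+2*b^2) := by
    apply Real.le_sqrt_of_sq_le
    have hb2 : b^2 ≤ 1/16 := by nlinarith
    nlinarith [mul_le_mul hb2 hb2 (sq_nonneg b) (by norm_num)]
  have h4 := mul_le_mul_of_nonneg_right h3 (show (0:ℝ) ≤ 2*b by linarith)
  nlinarith [h1, h4]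


lemma HD_W {b c d : ℝ} (hb : 0 < b) (hb4 : b ≤ 1/4) (hc : 0 < c) (hd : 0 < d)
    (hdval : d = |c - b|) :
    2*d*(Real.sinh b * Real.sinh c)
      ≤ d*(Real.cosh (Real.sqrt (1+2*b^2)*d) - Real.cosh d)
        + 2*(Real.sqrt (1+2*b^2))*(b*c)*Real.sinh (Real.sqrt (1+2*b^2)*d) := by
  set μ := Real.sqrt (1+2*b^2) with hμ
  have hμ1 : 1 ≤ μ := HD_mu_one
  have hμsq : μ^2 = 1+2*b^2 := HD_mu_sq
  have hμub : μ ≤ 1 + b^2 := HD_mu_ub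
  have hμlb : 1 + (31/32)*b^2 ≤ μ := HD_mu_lb hb.le hb4
  have hS0 : 0 ≤ Real.sinh d := Real.sinh_nonneg_iff.mpr hd.le
  have hC1 : 1 ≤ Real.cosh d := Real.one_le_cosh d
  have hC0 : 0 < Real.cosh d := Real.cosh_pos d
  have hsb0 : 0 ≤ Real.sinh b := Real.sinh_nonneg_iff.mpr hb.le
  rcases le_or_gt c b with hcb | hbc
  · -- c ≤ b : crude bound suffices
    have h1 : μ * d ≤ Real.sinh (μ*d) := Real.self_le_sinh_iff.mpr (by positivity)
    have h2 : Real.cosh d ≤ Real.cosh (μ*d) := HD_cosh_mono hd.le (by nlinarith)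
    have ha2 : b * Real.sinh c ≤ c * Real.sinh b := HD_A2 hc.le hcb
    have hsb2 : Real.sinh b ^2 ≤ b^2 + (16/15)*b^4 := HD_sinh_sq_b hb.le hb4
    have h3 : b * (Real.sinh b * Real.sinh c) ≤ μ^2 * (b^2 * c) := by
      have h4 := mul_le_mul_of_nonneg_left ha2 hsb0
      have h5 : Real.sinh b * (c * Real.sinh b) = c * Real.sinh b^2 := by ring
      have h6 : c * Real.sinh b^2 ≤ c * (b^2 + (16/15)*b^4) :=
        mul_le_mul_of_nonneg_left hsb2 hc.le
      have hb2 : b^2 ≤ 1/16 := by nlinarith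
      have h7' : μ^2*(b^2*c) = b^2*c + 2*(b^4*c) := by rw [hμsq]; ring
      have h8' : (0:ℝ) ≤ b^4*c := by positivity
      nlinarith [h4, h6, h7', h8']
    have h7 : Real.sinh b * Real.sinh c ≤ μ^2 * (b * c) := by
      rw [← mul_le_mul_iff_right₀ hb]
      calc b * (Real.sinh b * Real.sinh c) ≤ μ^2 * (b^2 * c) := h3
      _ = b * (μ^2 * (b*c)) := by ring
    have h8 := mul_le_mul_of_nonneg_left h1 (show (0:ℝ) ≤ 2*μ*(b*c) by positivity)
    have h9 := mul_le_mul_of_nonneg_left h7 (show (0:ℝ) ≤ 2*d by positivity)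
    nlinarith [h8, h9, h2, hd.le]
  · -- b < c, d = c - b
    have hcd : c = b + d := by rw [hdval, abs_of_pos (by linarith)]; ring
    subst hcd
    have hε0 : 0 ≤ (μ - 1) * d := by nlinarith
    have f1 : Real.cosh (μ*d)
        = Real.cosh d * Real.cosh ((μ-1)*d) + Real.sinh d * Real.sinh ((μ-1)*d) := by
      rw [show μ*d = d + (μ-1)*d by ring, Real.cosh_add]
    have f2 : Real.sinh (μ*d)
        = Real.sinh d * Real.cosh ((μ-1)*d) + Real.cosh d * Real.sinh ((μ-1)*d) := by
      rw [show μ*d = d + (μ-1)*d by ring, Real.sinh_add]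
    have f3 : 1 ≤ Real.cosh ((μ-1)*d) := Real.one_le_cosh _
    have f4 : (μ-1)*d ≤ Real.sinh ((μ-1)*d) := Real.self_le_sinh_iff.mpr hε0
    have f5 : Real.sinh (b+d) = Real.sinh b * Real.cosh d + Real.cosh b * Real.sinh d :=
      Real.sinh_add b d
    have s1 : (31/32)*b^2*(d^2*Real.sinh d) ≤ d*(Real.cosh (μ*d) - Real.cosh d) := by
      rw [f1]
      have t1 : 0 ≤ d * Real.cosh d * (Real.cosh ((μ-1)*d) - 1) := by
        apply mul_nonneg (by positivity); linarith
      have t2 : (μ-1)*d*(d*Real.sinh d) ≤ Real.sinh ((μ-1)*d)*(d*Real.sinh d) :=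
        mul_le_mul_of_nonneg_right f4 (by positivity)
      have t3 : (31/32)*b^2*(d^2*Real.sinh d) ≤ (μ-1)*d*(d*Real.sinh d) := by
        have := mul_le_mul_of_nonneg_right (show (31/32)*b^2 ≤ μ - 1 by linarith)
          (show (0:ℝ) ≤ d^2*Real.sinh d by positivity)
        nlinarith [this]
      nlinarith [t1, t2, t3]
    have s2 : Real.sinh d + (μ-1)*d*Real.cosh d ≤ Real.sinh (μ*d) := by
      rw [f2]
      have t1 : Real.sinh d * 1 ≤ Real.sinh d * Real.cosh ((μ-1)*d) :=
        mul_le_mul_of_nonneg_left f3 hS0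
      have t2 : Real.cosh d * ((μ-1)*d) ≤ Real.cosh d * Real.sinh ((μ-1)*d) :=
        mul_le_mul_of_nonneg_left f4 hC0.le
      nlinarith [t1, t2]
    have s3 := mul_le_mul_of_nonneg_left s2 (show (0:ℝ) ≤ 2*μ*(b*(b+d)) by positivity)
    have hμε : b^2 ≤ μ*(μ-1) := by nlinarith
    have s4 : 2*b^2*((b*(b+d))*(d*Real.cosh d)) ≤ 2*(μ*(μ-1))*((b*(b+d))*(d*Real.cosh d)) := by
      apply mul_le_mul_of_nonneg_right _ (by positivity)
      linarith
    have s5 : 2*(1+(31/32)*b^2)*(b^2*Real.sinh d) ≤ 2*μ*(b^2*Real.sinh d) := by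
      apply mul_le_mul_of_nonneg_right _ (by positivity)
      linarith
    have hsb2 : Real.sinh b ^2 ≤ b^2 + (16/15)*b^4 := HD_sinh_sq_b hb.le hb4
    have hscμ : Real.sinh b * Real.cosh b ≤ μ * b := HD_sc_mu hb.le hb4
    have s6 : 2*d*(Real.sinh b * Real.sinh (b+d))
        ≤ 2*d*((b^2 + (16/15)*b^4)*Real.cosh d) + 2*d*((μ*b)*Real.sinh d) := by
      rw [f5]
      have t1 : Real.sinh b * (Real.sinh b * Real.cosh d) ≤ (b^2+(16/15)*b^4)*Real.cosh d := by
        nlinarith [mul_le_mul_of_nonneg_right hsb2 hC0.le]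
      have t2 : Real.sinh b * (Real.cosh b * Real.sinh d) ≤ (μ*b)*Real.sinh d := by
        nlinarith [mul_le_mul_of_nonneg_right hscμ hS0]
      nlinarith [mul_le_mul_of_nonneg_left (add_le_add t1 t2) (show (0:ℝ) ≤ 2*d by positivity)]
    have hZ := HD_Z hb.le hb4 hd.le
    have hZb := mul_le_mul_of_nonneg_left hZ (sq_nonneg b)
    have hpos : 0 ≤ 2*b^4*(d*Real.cosh d) := by positivity
    nlinarith [s1, s3, s4, s5, s6, hZb, hpos]


lemma HD_key {b c A a abar : ℝ} (hb : 0 ≤ b) (hb4 : b ≤ 1/4) (hc : 0 ≤ c)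
    (ha : 0 ≤ a) (habar : 0 ≤ abar)
    (hlaw : Real.cosh a = Real.cosh b * Real.cosh c - Real.sinh b * Real.sinh c * Real.cos A)
    (habar2 : abar ^ 2 = b ^ 2 + c ^ 2 - 2 * b * c * Real.cos A) :
    abar ^ 2 ≤ a ^ 2 ∧ a ^ 2 ≤ (1 + 2 * b ^ 2) * abar ^ 2 := by
  obtain ⟨u, hu⟩ : ∃ u : ℝ, u = 1 - Real.cos A := ⟨_, rfl⟩
  have hu0 : 0 ≤ u := by have := Real.cos_le_one A; rw [hu]; linarith only [this]
  have hu2 : u ≤ 2 := by have := Real.neg_one_le_cos A; rw [hu]; linarith only [this]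
  have hcosA : Real.cos A = 1 - u := by rw [hu]; ring
  have hca : Real.cosh a = Real.cosh (c - b) + u * (Real.sinh b * Real.sinh c) := by
    rw [hlaw, Real.cosh_sub, hcosA]; ring
  have hab2 : abar ^ 2 = (c-b)^2 + 2*(b*c)*u := by rw [habar2, hcosA]; ring
  obtain ⟨d, hd⟩ : ∃ d : ℝ, d = |c - b| := ⟨_, rfl⟩
  have hd0 : 0 ≤ d := hd ▸ abs_nonneg _
  have hdsq : d^2 = (c-b)^2 := hd ▸ sq_abs _
  have hcoshd : Real.cosh d = Real.cosh (c-b) := hd ▸ Real.cosh_abs _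
  have hbc0 : 0 ≤ b * c := mul_nonneg hb hc
  have hbcu : 0 ≤ b * c * u := mul_nonneg hbc0 hu0
  have habard : d ≤ abar := by
    have h1 : d^2 ≤ abar^2 := by rw [hdsq, hab2]; linarith only [hbcu]
    exact (abs_le_of_sq_le_sq' h1 habar).2
  have habarbc : abar ≤ b + c := by
    have h1 : abar^2 ≤ (b+c)^2 := by
      rw [hab2]; linarith only [mul_le_mul_of_nonneg_left hu2 hbc0, hbc0]
    exact (abs_le_of_sq_le_sq' h1 (by linarith only [hb, hc])).2
  have hid1 : (b+c)^2 - d^2 = 4*(b*c) := by rw [hdsq]; ring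
  have hid2 : abar^2 - d^2 = 2*(b*c)*u := by rw [hdsq, hab2]; ring
  have hid3 : Real.cosh (b+c) - Real.cosh d = 2*(Real.sinh b * Real.sinh c) := by
    rw [hcoshd, Real.cosh_add, Real.cosh_sub]; ring
  ------------------------------------------------------------------
  -- LOWER BOUND
  ------------------------------------------------------------------
  have hlower : abar ≤ a := by
    have hcc : Real.cosh abar ≤ Real.cosh a := by
      have hsl := HD_slope hd0 habard habarbc
      rw [hid1, hid3] at hsl
      have hsl2 : (Real.cosh abar - Real.cosh d) * (4*(b*c))
          ≤ 2*(Real.sinh b * Real.sinh c) * (2*(b*c)*u) := by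
        calc (Real.cosh abar - Real.cosh d) * (4*(b*c))
            ≤ 2*(Real.sinh b * Real.sinh c) * (abar^2 - d^2) := hsl
        _ = 2*(Real.sinh b * Real.sinh c) * (2*(b*c)*u) := by rw [hid2]
      rcases lt_or_eq_of_le hbc0 with hbc | hbc
      · have h3 : Real.cosh abar - Real.cosh d ≤ u * (Real.sinh b * Real.sinh c) := by
          rw [← mul_le_mul_iff_left₀ (show (0:ℝ) < 4*(b*c) by linarith only [hbc])]
          calc (Real.cosh abar - Real.cosh d) * (4*(b*c))
              ≤ 2*(Real.sinh b * Real.sinh c) * (2*(b*c)*u) := hsl2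
          _ = u * (Real.sinh b * Real.sinh c) * (4*(b*c)) := by ring
        rw [hca, ← hcoshd]; linarith only [h3]
      · have habar_eq : abar = d := by
          have h4 : abar^2 = d^2 := by rw [hab2, hdsq, ← hbc]; ring
          exact le_antisymm (abs_le_of_sq_le_sq' (le_of_eq h4) hd0).2
            (abs_le_of_sq_le_sq' (ge_of_eq h4) habar).2
        have hsbc : Real.sinh b * Real.sinh c = 0 := by
          rcases mul_eq_zero.mp hbc.symm with h | h
          · rw [h, Real.sinh_zero]; ring
          · rw [h, Real.sinh_zero]; ring
        rw [hca, hsbc, habar_eq, hcoshd]; simp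
    exact HD_le_of_cosh_le habar ha hcc
  ------------------------------------------------------------------
  -- UPPER BOUND
  ------------------------------------------------------------------
  obtain ⟨μ, hμ⟩ : ∃ m : ℝ, m = Real.sqrt (1+2*b^2) := ⟨_, rfl⟩
  have hμ1 : 1 ≤ μ := hμ ▸ HD_mu_one
  have hμsq : μ^2 = 1+2*b^2 := hμ ▸ HD_mu_sq
  have hμ0 : 0 ≤ μ := by linarith only [hμ1]
  have hupper : a ≤ μ * abar := by
    have hcc : Real.cosh a ≤ Real.cosh (μ * abar) := by
      rcases lt_or_eq_of_le hbc0 with hbc | hbc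
      swap
      · -- b*c = 0 : cosh a = cosh abar
        have habar_eq : abar = d := by
          have h4 : abar^2 = d^2 := by rw [hab2, hdsq, ← hbc]; ring
          exact le_antisymm (abs_le_of_sq_le_sq' (le_of_eq h4) hd0).2
            (abs_le_of_sq_le_sq' (ge_of_eq h4) habar).2
        have hsbc : Real.sinh b * Real.sinh c = 0 := by
          rcases mul_eq_zero.mp hbc.symm with h | h
          · rw [h, Real.sinh_zero]; ring
          · rw [h, Real.sinh_zero]; ring
        have h1 : Real.cosh a = Real.cosh abar := by
          rw [hca, hsbc, habar_eq, hcoshd]; simp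
        rw [h1]
        exact HD_cosh_mono habar (le_mul_of_one_le_left habar hμ1)
      · have hbp : 0 < b := by
          rcases lt_or_eq_of_le hb with h | h
          · exact h
          · exfalso; rw [← h] at hbc; simp at hbc
        have hcp : 0 < c := by
          rcases lt_or_eq_of_le hc with h | h
          · exact h
          · exfalso; rw [← h] at hbc; simp at hbc
        rcases eq_or_lt_of_le hd0 with hdz | hdp
        · -- d = 0 : b = c
          have hcb : c = b := by
            have h5 : |c - b| = 0 := by rw [← hd, ← hdz]
            have h6 := abs_eq_zero.mp h5; linarith only [h6]
          subst hcb
          have hsb2 : Real.sinh c ^2 ≤ c^2 + (16/15)*c^4 := HD_sinh_sq_b hc hb4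
          have hclb := HD_coshlb (mul_nonneg hμ0 habar)
          have hμabar : (μ*abar)^2 = (1+2*c^2)*((c-c)^2 + 2*(c*c)*u) := by
            rw [mul_pow, hμsq, ← hab2]
          have h1 : Real.sinh c * Real.sinh c ≤ c^2 + 2*c^4 := by
            have e : Real.sinh c * Real.sinh c = Real.sinh c^2 := (sq _).symm
            rw [e]; linarith only [hsb2, pow_nonneg hc 4]
          have h2 := mul_le_mul_of_nonneg_left h1 hu0
          have hgoal : Real.cosh a ≤ 1 + (μ*abar)^2/2 := by
            rw [hca, hμabar, show c - c = 0 by ring, Real.cosh_zero]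
            linarith only [h2]
          linarith only [hclb, hgoal]
        · -- d > 0 : the main case
          have hW := HD_W hbp hb4 hcp hdp hd
          rw [← hμ] at hW
          have hT := HD_T (mul_pos (by linarith only [hμ1] : (0:ℝ) < μ) hdp)
            (show μ*d ≤ μ*abar from mul_le_mul_of_nonneg_left habard hμ0)
          have hTsq : (μ*abar)^2 - (μ*d)^2 = μ^2 * (2*(b*c)*u) := by
            rw [mul_pow, mul_pow, ← hid2]; ring
          rw [hTsq] at hT
          have hmono : Real.cosh d ≤ Real.cosh (μ*d) :=
            HD_cosh_mono hd0 (le_mul_of_one_le_left hd0 hμ1)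
          have key2 : u * (d*(Real.sinh b * Real.sinh c) - μ*(b*c)*Real.sinh (μ*d))
              ≤ d*(Real.cosh (μ*d) - Real.cosh d) := by
            rcases le_or_gt (d*(Real.sinh b * Real.sinh c) - μ*(b*c)*Real.sinh (μ*d)) 0
              with hX0 | hX0
            · have h5 : u * (d*(Real.sinh b * Real.sinh c) - μ*(b*c)*Real.sinh (μ*d)) ≤ 0 :=
                mul_nonpos_of_nonneg_of_nonpos hu0 hX0
              have h6 : 0 ≤ d*(Real.cosh (μ*d) - Real.cosh d) :=
                mul_nonneg hd0 (by linarith only [hmono])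
              linarith only [h5, h6]
            · have h5 : u * (d*(Real.sinh b * Real.sinh c) - μ*(b*c)*Real.sinh (μ*d))
                  ≤ 2 * (d*(Real.sinh b * Real.sinh c) - μ*(b*c)*Real.sinh (μ*d)) :=
                mul_le_mul_of_nonneg_right hu2 hX0.le
              linarith only [hW, h5]
          have h5 := mul_le_mul_of_nonneg_left key2 (show (0:ℝ) ≤ 2*μ by linarith only [hμ1])
          have e1 : Real.cosh a = Real.cosh d + u * (Real.sinh b * Real.sinh c) := by
            rw [hca, hcoshd]
          have hfin : 2*(μ*d)*(Real.cosh a) ≤ 2*(μ*d)*(Real.cosh (μ*abar)) := by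
            rw [e1]
            linarith only [hT, h5]
          have hμd : (0:ℝ) < 2*(μ*d) := by
            have := mul_pos (show (0:ℝ) < μ by linarith only [hμ1]) hdp
            linarith only [this]
          exact le_of_mul_le_mul_left hfin hμd
    exact HD_le_of_cosh_le ha (mul_nonneg hμ0 habar) hcc
  constructor
  · have h1 := mul_le_mul hlower hlower habar ha
    rw [pow_two, pow_two]; exact h1
  · have h1 := mul_le_mul hupper hupper ha (mul_nonneg hμ0 habar)
    have h2 : a^2 ≤ (μ*abar)^2 := by rw [pow_two, pow_two]; exact h1
    rw [mul_pow, hμsq] at h2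
    linarith only [h2]


theorem hyperbolic_distortion_curvature_K
    (K a b c A : ℝ) (hK : 0 < K)
    (ha : 0 ≤ a) (hb : 0 ≤ b) (hc : 0 ≤ c)
    (hA : A ∈ Set.Icc (0 : ℝ) Real.pi)
    (hlaw : Real.cosh (Real.sqrt K * a)
        = Real.cosh (Real.sqrt K * b) * Real.cosh (Real.sqrt K * c)
          - Real.sinh (Real.sqrt K * b) * Real.sinh (Real.sqrt K * c)
              * Real.cos A)
    (hb4 : b ≤ 1 / (4 * Real.sqrt K))
    (abar : ℝ) (habar : 0 ≤ abar)
    (habar2 : abar ^ 2 = b ^ 2 + c ^ 2 - 2 * b * c * Real.cos A) :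
    abar ^ 2 ≤ a ^ 2 ∧ a ^ 2 ≤ (1 + 2 * K * b ^ 2) * abar ^ 2 := by
  have hsK : 0 < Real.sqrt K := Real.sqrt_pos.mpr hK
  have hKsq : Real.sqrt K ^ 2 = K := Real.sq_sqrt hK.le
  have hb4' : Real.sqrt K * b ≤ 1/4 := by
    have h1 := mul_le_mul_of_nonneg_left hb4 hsK.le
    have h2 : Real.sqrt K * (1 / (4 * Real.sqrt K)) = 1/4 := by
      field_simp
    linarith only [h1, h2.le, h2.ge]
  have habar2' : (Real.sqrt K * abar) ^ 2
      = (Real.sqrt K * b) ^ 2 + (Real.sqrt K * c) ^ 2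
        - 2 * (Real.sqrt K * b) * (Real.sqrt K * c) * Real.cos A := by
    have : (Real.sqrt K * abar)^2 = K * abar^2 := by rw [mul_pow, hKsq]
    rw [this, habar2, mul_pow, mul_pow, hKsq]
    linear_combination (2*b*c*Real.cos A) * hKsq
  have hmain := HD_key (b := Real.sqrt K * b) (c := Real.sqrt K * c) (A := A)
    (a := Real.sqrt K * a) (abar := Real.sqrt K * abar)
    (mul_nonneg hsK.le hb) hb4' (mul_nonneg hsK.le hc)
    (mul_nonneg hsK.le ha) (mul_nonneg hsK.le habar) hlaw habar2'
  obtain ⟨h1, h2⟩ := hmain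
  rw [mul_pow, mul_pow, hKsq] at h1 h2
  constructor
  · have := (mul_le_mul_iff_right₀ hK).mp h1
    exact this
  · rw [mul_pow, hKsq] at h2
    have h3 : K * a^2 ≤ K * ((1 + 2*K*b^2) * abar^2) := by
      calc K * a^2 ≤ (1 + 2*(K*b^2)) * (K * abar^2) := h2
      _ = K * ((1 + 2*K*b^2) * abar^2) := by ring
    exact (mul_le_mul_iff_right₀ hK).mp h3
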